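/- Let p > 1 be an integer and n ≥ 6 an even integer. Then (n/2 + 1)^p + 2·(n/2)^p + (n/2 - 1)^p + (n-4) < (n-1)^p + (n-2)·2^p + 1. (Equivalently, the p-th power sum of the n-tuple (n/2+1, n/2, n/2, n/2-1, 1, …, 1) is strictly less than that of (n-1, 2, …, 2, 1).) -/
import Mathlib

private lemma key_aux (x : ℝ) (hx : 3 ≤ x) : ∀ p : ℕ, 2 ≤ p →
    (x*(x+1)^p + (2*x-2)*x^p + (x-2)*(x-1)^p ≤ (2*x-2)*(2*x-1)^p) ∧
    ((x+1)^p + 2*x^p + (x-1)^p + (2*x-4) < (2*x-1)^p + (2*x-2)*2^p + 1) := by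
  intro p hp
  induction p, hp using Nat.le_induction with
  | base =>
    constructor
    · nlinarith [sq_nonneg x, sq_nonneg (x-3)]
    · nlinarith [sq_nonneg x]
  | succ p hp ih =>
    obtain ⟨hg, hf⟩ := ih
    have hx1 : (0:ℝ) ≤ x + 1 := by linarith
    have h2p : (0:ℝ) < 2^p := by positivity
    have hxp : (0:ℝ) ≤ x^p := pow_nonneg (by linarith) p
    have hx1p : (0:ℝ) ≤ (x-1)^p := pow_nonneg (by linarith) p
    have h2x1p : (0:ℝ) ≤ (2*x-1)^p := pow_nonneg (by linarith) p
    have e1 : (x+1)^(p+1) = (x+1)^p * (x+1) := pow_succ _ _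
    have e2 : x^(p+1) = x^p * x := pow_succ _ _
    have e3 : (x-1)^(p+1) = (x-1)^p * (x-1) := pow_succ _ _
    have e4 : (2*x-1)^(p+1) = (2*x-1)^p * (2*x-1) := pow_succ _ _
    have e5 : (2:ℝ)^(p+1) = 2^p * 2 := pow_succ _ _
    have hmul := mul_le_mul_of_nonneg_left hg hx1
    constructor
    · rw [e1, e2, e3, e4]
      nlinarith [mul_nonneg (mul_nonneg (by linarith : (0:ℝ) ≤ x-2) (by linarith : (0:ℝ) ≤ 2*x-2)) h2x1p,
        mul_nonneg (by linarith : (0:ℝ) ≤ 2*x-2) hxp,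
        mul_nonneg (by linarith : (0:ℝ) ≤ x-2) hx1p]
    · rw [e1, e2, e3, e4, e5]
      nlinarith [mul_nonneg (by linarith : (0:ℝ) ≤ 2*x-2) h2p.le]

theorem mu2_lt_mu1 (p n : ℕ) (hp : 1 < p) (hn : 6 ≤ n) (heven : Even n) :
    ((n : ℝ) / 2 + 1) ^ p + 2 * ((n : ℝ) / 2) ^ p + ((n : ℝ) / 2 - 1) ^ p +
        ((n : ℝ) - 4) <
      ((n : ℝ) - 1) ^ p + ((n : ℝ) - 2) * 2 ^ p + 1 := by
  have hn6 : (6:ℝ) ≤ (n:ℝ) := by exact_mod_cast hn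
  have hx : (3:ℝ) ≤ (n:ℝ)/2 := by linarith
  have h := (key_aux ((n:ℝ)/2) hx p hp).2
  have e1 : 2*((n:ℝ)/2) - 1 = (n:ℝ) - 1 := by ring
  have e2 : 2*((n:ℝ)/2) - 2 = (n:ℝ) - 2 := by ring
  have e3 : 2*((n:ℝ)/2) - 4 = (n:ℝ) - 4 := by ring
  rw [e1, e2, e3] at h
  linarith
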